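/- Let 0 ≤ α < 1 be real, let f ∈ Ω, and let z ∈ ℂ with 0 < |z| < 2(1−α)/(2−α). Then f(z) ≠ 0 and Re(z·f'(z)/f(z)) > α. (That is, the S*(α)-radius of starlikeness of order α for the class Ω is 2(1−α)/(2−α).) -/

import Mathlib

open Complex Metric

/-- The open unit disc in `ℂ`. -/
def unitDisc : Set ℂ := Metric.ball 0 1

/-- `f ∈ 𝒜ₙ`: `f` is analytic on the unit disc with power series
`f(z) = z + ∑_{k=n+1}^∞ a_k z^k`. -/
def MemA (n : ℕ) (f : ℂ → ℂ) : Prop :=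
  DifferentiableOn ℂ f unitDisc ∧
    ∃ a : ℕ → ℂ, ∀ z ∈ unitDisc, f z = z + ∑' k : ℕ, a k * z ^ (n + 1 + k)

/-- `f ∈ Ωₙ`: `f ∈ 𝒜ₙ` and `|z f'(z) - f(z)| < 1/2` on the unit disc. -/
def MemOmega (n : ℕ) (f : ℂ → ℂ) : Prop :=
  MemA n f ∧ ∀ z ∈ unitDisc, ‖z * deriv f z - f z‖ < 1 / 2

open Filter Topology Set

/-- Auxiliary: the tail series divided by `w` tends to zero. -/
lemma aux_tendsto_tsum_div (a : ℕ → ℂ) :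
    Filter.Tendsto (fun w : ℂ => (∑' k : ℕ, a k * w ^ (1 + 1 + k)) / w) (𝓝[≠] 0) (𝓝 0) := by
  have hid : ∀ w : ℂ, (∑' k : ℕ, a k * w ^ (1 + 1 + k)) = w ^ 2 * ∑' k : ℕ, a k * w ^ k := by
    intro w
    rw [← tsum_mul_left]
    exact tsum_congr fun k => by ring
  by_cases hS : ∃ z₀ : ℂ, z₀ ≠ 0 ∧ Summable fun k => a k * z₀ ^ k
  · obtain ⟨z₀, hz₀, hsum⟩ := hS
    obtain ⟨C, hC⟩ : ∃ C : ℝ, ∀ k, ‖a k * z₀ ^ k‖ ≤ C := by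
      have h2 : Filter.Tendsto (fun k => ‖a k * z₀ ^ k‖) atTop (𝓝 0) := by
        simpa using hsum.tendsto_atTop_zero.norm
      obtain ⟨C, hC⟩ := h2.bddAbove_range
      exact ⟨C, fun k => hC ⟨k, rfl⟩⟩
    have hC0 : 0 ≤ C := le_trans (norm_nonneg _) (hC 0)
    have hz₀pos : 0 < ‖z₀‖ := norm_pos_iff.mpr hz₀
    have key : ∀ w : ℂ, w ≠ 0 → ‖w‖ ≤ ‖z₀‖ / 2 →
        ‖(∑' k : ℕ, a k * w ^ (1 + 1 + k)) / w‖ ≤ 2 * C * ‖w‖ := by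
      intro w hw hwle
      have hbound : ∀ k : ℕ, ‖a k * w ^ k‖ ≤ C * (1/2 : ℝ) ^ k := by
        intro k
        have h1 : ‖a k * w ^ k‖ = ‖a k‖ * ‖w‖ ^ k := by
          rw [norm_mul, norm_pow]
        have h2 : ‖a k‖ * ‖w‖ ^ k ≤ ‖a k‖ * (‖z₀‖ / 2) ^ k := by
          gcongr
        have h3 : ‖a k‖ * (‖z₀‖ / 2) ^ k = ‖a k * z₀ ^ k‖ * (1/2 : ℝ) ^ k := by
          rw [norm_mul, norm_pow, div_pow, mul_comm ‖a k‖]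
          rw [one_div, inv_pow]
          ring
        have h4 : ‖a k * z₀ ^ k‖ * (1/2 : ℝ) ^ k ≤ C * (1/2 : ℝ) ^ k := by
          gcongr
          exact hC k
        rw [h1]
        calc ‖a k‖ * ‖w‖ ^ k ≤ ‖a k‖ * (‖z₀‖ / 2) ^ k := h2
          _ = ‖a k * z₀ ^ k‖ * (1/2 : ℝ) ^ k := h3
          _ ≤ C * (1/2 : ℝ) ^ k := h4
      have hgeo : Summable fun k : ℕ => C * (1/2 : ℝ) ^ k :=
        (summable_geometric_of_lt_one (by norm_num) (by norm_num)).mul_left C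
      have hψsum : Summable fun k : ℕ => a k * w ^ k :=
        Summable.of_norm_bounded hgeo hbound
      have hψnormsum : Summable fun k : ℕ => ‖a k * w ^ k‖ :=
        Summable.of_nonneg_of_le (fun k => norm_nonneg _) hbound hgeo
      have hψ : ‖∑' k : ℕ, a k * w ^ k‖ ≤ 2 * C := by
        calc ‖∑' k : ℕ, a k * w ^ k‖ ≤ ∑' k : ℕ, ‖a k * w ^ k‖ :=
              norm_tsum_le_tsum_norm hψnormsum
          _ ≤ ∑' k : ℕ, C * (1/2 : ℝ) ^ k := Summable.tsum_le_tsum hbound hψnormsum hgeo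
          _ = C * (1 - 1/2)⁻¹ := by
              rw [tsum_mul_left, tsum_geometric_of_lt_one (by norm_num) (by norm_num)]
          _ = 2 * C := by ring
      rw [hid w]
      have : w ^ 2 * (∑' k : ℕ, a k * w ^ k) / w = w * ∑' k : ℕ, a k * w ^ k := by
        field_simp
      rw [this, norm_mul]
      calc ‖w‖ * ‖∑' k : ℕ, a k * w ^ k‖ ≤ ‖w‖ * (2 * C) := by gcongr
        _ = 2 * C * ‖w‖ := by ring
    have hev : ∀ᶠ w in 𝓝[≠] (0:ℂ),
        ‖(∑' k : ℕ, a k * w ^ (1 + 1 + k)) / w‖ ≤ 2 * C * ‖w‖ := by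
      have hball : ∀ᶠ w in 𝓝 (0:ℂ), ‖w‖ ≤ ‖z₀‖ / 2 := by
        have : Metric.ball (0:ℂ) (‖z₀‖/2) ∈ 𝓝 (0:ℂ) :=
          Metric.ball_mem_nhds 0 (by positivity)
        filter_upwards [this] with w hw
        exact le_of_lt (by simpa [mem_ball_zero_iff] using hw)
      filter_upwards [self_mem_nhdsWithin, mem_nhdsWithin_of_mem_nhds hball] with w hw hwle
      exact key w hw hwle
    have hlim : Filter.Tendsto (fun w : ℂ => 2 * C * ‖w‖) (𝓝[≠] 0) (𝓝 0) := by
      have : Filter.Tendsto (fun w : ℂ => 2 * C * ‖w‖) (𝓝 0) (𝓝 (2 * C * ‖(0:ℂ)‖)) :=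
        (continuous_const.mul continuous_norm).tendsto 0
      simpa using this.mono_left nhdsWithin_le_nhds
    exact squeeze_zero_norm' hev hlim
  · push_neg at hS
    have hev : ∀ᶠ w in 𝓝[≠] (0:ℂ),
        (fun w : ℂ => (0:ℂ)) w = (∑' k : ℕ, a k * w ^ (1 + 1 + k)) / w := by
      filter_upwards [self_mem_nhdsWithin] with w hw
      have hwne : w ≠ 0 := hw
      have hns : ¬ Summable fun k : ℕ => a k * w ^ (1 + 1 + k) := by
        intro hsum
        apply hS w hwne
        have h2 := hsum.mul_left ((w ^ 2)⁻¹)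
        refine h2.congr fun k => ?_
        field_simp
        ring
      rw [tsum_eq_zero_of_not_summable hns, zero_div]
    exact tendsto_const_nhds.congr' hev

theorem stmt_15 (α : ℝ) (hα0 : 0 ≤ α) (hα1 : α < 1) (f : ℂ → ℂ) (hf : MemOmega 1 f)
    (z : ℂ) (hz0 : 0 < ‖z‖) (hz : ‖z‖ < 2 * (1 - α) / (2 - α)) :
    f z ≠ 0 ∧ (z * deriv f z / f z).re > α := by
  obtain ⟨⟨hdiff, a, hser⟩, hbound⟩ := hf
  have hUopen : IsOpen unitDisc := isOpen_ball
  have hα2 : (0:ℝ) < 2 - α := by linarith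
  have hzne : z ≠ 0 := norm_pos_iff.mp hz0
  have hrα : ‖z‖ * (2 - α) < 2 * (1 - α) := (lt_div_iff₀ hα2).mp hz
  have hr1 : ‖z‖ < 1 := by nlinarith [hz0]
  have hzU : z ∈ unitDisc := by simpa [unitDisc, mem_ball_zero_iff] using hr1
  have h0U : (0:ℂ) ∈ unitDisc := by simp [unitDisc]
  -- f 0 = 0
  have hf0 : f 0 = 0 := by
    have h := hser 0 h0U
    have hterm : ∀ k : ℕ, a k * (0:ℂ) ^ (1 + 1 + k) = 0 := by
      intro k
      rw [zero_pow (by omega : 1 + 1 + k ≠ 0), mul_zero]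
    rw [h]
    simp [hterm]
  -- analyticity
  have han : AnalyticOnNhd ℂ f unitDisc := hdiff.analyticOnNhd hUopen
  have hdf : DifferentiableOn ℂ (deriv f) unitDisc := han.deriv.differentiableOn
  -- g
  set g : ℂ → ℂ := fun w => w * deriv f w - f w with hg
  have hgdiff : DifferentiableOn ℂ g unitDisc :=
    (differentiableOn_id.mul hdf).sub hdiff
  have hg0 : g 0 = 0 := by simp [hg, hf0]
  have hgd0 : deriv g 0 = 0 := by
    have hfd : HasDerivAt f (deriv f 0) 0 :=
      (hdiff.differentiableAt (hUopen.mem_nhds h0U)).hasDerivAt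
    have hdfd : HasDerivAt (deriv f) (deriv (deriv f) 0) 0 :=
      (hdf.differentiableAt (hUopen.mem_nhds h0U)).hasDerivAt
    have h2 : HasDerivAt g (1 * deriv f 0 + 0 * deriv (deriv f) 0 - deriv f 0) 0 :=
      ((hasDerivAt_id' (0:ℂ)).mul hdfd).sub hfd
    have := h2.deriv
    simpa using this
  -- h = g / z²
  set h : ℂ → ℂ := dslope (dslope g 0) 0 with hh
  have hhdiff : DifferentiableOn ℂ h unitDisc := by
    rw [hh, Complex.differentiableOn_dslope (hUopen.mem_nhds h0U),
      Complex.differentiableOn_dslope (hUopen.mem_nhds h0U)]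
    exact hgdiff
  have hhval : ∀ w : ℂ, w ≠ 0 → h w = g w / w ^ 2 := by
    intro w hw
    have e1 : dslope g 0 w = g w / w := by
      rw [dslope_of_ne _ hw, slope_def_field, hg0, sub_zero, sub_zero]
    have e2 : dslope g 0 0 = 0 := by rw [dslope_same, hgd0]
    rw [hh, dslope_of_ne _ hw, slope_def_field, e1, e2, sub_zero, sub_zero]
    rw [div_div, sq]
  -- bound on h : max modulus principle
  have hhbound : ∀ w ∈ unitDisc, ‖h w‖ ≤ 1 / 2 := by
    intro w hwU
    have hw1 : ‖w‖ < 1 := by simpa [unitDisc, mem_ball_zero_iff] using hwU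
    have key : ∀ s : ℝ, ‖w‖ < s → s < 1 → ‖h w‖ ≤ 1 / (2 * s ^ 2) := by
      intro s hws hs1
      have hs0 : 0 < s := lt_of_le_of_lt (norm_nonneg w) hws
      have hsub : Metric.closedBall (0:ℂ) s ⊆ unitDisc :=
        Metric.closedBall_subset_ball hs1
      have hd : DiffContOnCl ℂ h (Metric.ball (0:ℂ) s) := by
        apply DifferentiableOn.diffContOnCl
        rw [closure_ball (0:ℂ) hs0.ne']
        exact hhdiff.mono hsub
      have hfr : ∀ x ∈ frontier (Metric.ball (0:ℂ) s), ‖h x‖ ≤ 1 / (2 * s ^ 2) := by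
        intro x hx
        rw [frontier_ball (0:ℂ) hs0.ne'] at hx
        have hxnorm : ‖x‖ = s := by simpa [mem_sphere_iff_norm] using hx
        have hxne : x ≠ 0 := by
          intro h0
          rw [h0, norm_zero] at hxnorm
          exact hs0.ne hxnorm
        have hxU : x ∈ unitDisc := by
          simp only [unitDisc, mem_ball_zero_iff]
          rw [hxnorm]; exact hs1
        rw [hhval x hxne, norm_div, norm_pow, hxnorm]
        have hb := le_of_lt (hbound x hxU)
        rw [div_le_div_iff₀ (by positivity) (by positivity)]
        calc ‖g x‖ * (2 * s ^ 2) ≤ (1/2) * (2 * s ^ 2) := by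
              gcongr
          _ = 1 * s ^ 2 := by ring
      have hwcl : w ∈ closure (Metric.ball (0:ℂ) s) :=
        subset_closure (by simpa [mem_ball_zero_iff] using hws)
      exact Complex.norm_le_of_forall_mem_frontier_norm_le isBounded_ball hd hfr hwcl
    have hc : Filter.Tendsto (fun s : ℝ => 1 / (2 * s ^ 2)) (𝓝[<] (1:ℝ))
        (𝓝 (1 / (2 * (1:ℝ) ^ 2))) := by
      apply Filter.Tendsto.mono_left _ nhdsWithin_le_nhds
      exact (ContinuousAt.div continuousAt_const (by fun_prop) (by norm_num))
    have hevs : ∀ᶠ s in 𝓝[<] (1:ℝ), ‖h w‖ ≤ 1 / (2 * s ^ 2) := by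
      have hIoo : Set.Ioo ‖w‖ 1 ∈ 𝓝[<] (1:ℝ) :=
        Ioo_mem_nhdsLT_of_mem ⟨hw1, le_refl 1⟩
      filter_upwards [hIoo] with s hs
      exact key s hs.1 hs.2
    have := ge_of_tendsto hc hevs
    linarith [this]
  -- deriv f 0 = 1
  have hdf0 : deriv f 0 = 1 := by
    have hfd : HasDerivAt f (deriv f 0) 0 :=
      (hdiff.differentiableAt (hUopen.mem_nhds h0U)).hasDerivAt
    have hφ : HasDerivAt (fun w => f w - w) (deriv f 0 - 1) 0 :=
      hfd.sub (hasDerivAt_id' (0:ℂ))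
    have h1 : Filter.Tendsto (slope (fun w => f w - w) 0) (𝓝[≠] (0:ℂ)) (𝓝 (deriv f 0 - 1)) :=
      hasDerivAt_iff_tendsto_slope.mp hφ
    have h2 : Filter.Tendsto (slope (fun w => f w - w) 0) (𝓝[≠] (0:ℂ)) (𝓝 0) := by
      have heq : ∀ᶠ w in 𝓝[≠] (0:ℂ),
          (fun w : ℂ => (∑' k : ℕ, a k * w ^ (1 + 1 + k)) / w) w
            = slope (fun w => f w - w) 0 w := by
        filter_upwards [self_mem_nhdsWithin,
          mem_nhdsWithin_of_mem_nhds (hUopen.mem_nhds h0U)] with w hw hwU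
        rw [slope_def_field, hser w hwU, hf0]
        simp only [sub_zero]
        congr 1
        ring
      exact (aux_tendsto_tsum_div a).congr' heq
    have := tendsto_nhds_unique h1 h2
    have : deriv f 0 - 1 = 0 := this
    linear_combination this
  -- q = f z / z
  set q : ℂ → ℂ := dslope f 0 with hq
  have hqdiff : DifferentiableOn ℂ q unitDisc :=
    (Complex.differentiableOn_dslope (hUopen.mem_nhds h0U)).mpr hdiff
  have hq0 : q 0 = 1 := by rw [hq, dslope_same, hdf0]
  have hqval : ∀ w : ℂ, w ≠ 0 → q w = f w / w := by
    intro w hw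
    rw [hq, dslope_of_ne _ hw, slope_def_field, hf0, sub_zero, sub_zero]
  have hqderiv : ∀ w ∈ unitDisc, w ≠ 0 → HasDerivAt q (h w) w := by
    intro w hwU hw
    have hfd : HasDerivAt f (deriv f w) w :=
      (hdiff.differentiableAt (hUopen.mem_nhds hwU)).hasDerivAt
    have hdv : HasDerivAt (fun x => f x / x) ((deriv f w * w - f w * 1) / w ^ 2) w :=
      hfd.div (hasDerivAt_id' w) hw
    have heq : q =ᶠ[𝓝 w] fun x => f x / x := by
      filter_upwards [isOpen_ne.mem_nhds hw] with x hx
      exact hqval x hx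
    have h' := hdv.congr_of_eventuallyEq heq
    refine h'.congr_deriv ?_
    rw [hhval w hw, hg]
    ring
  have hqd0 : HasDerivAt q (h 0) 0 := by
    have hqa : AnalyticOnNhd ℂ q unitDisc := hqdiff.analyticOnNhd hUopen
    have hcont1 : ContinuousAt (deriv q) 0 := (hqa.deriv 0 h0U).continuousAt
    have hcont2 : ContinuousAt h 0 :=
      (hhdiff.differentiableAt (hUopen.mem_nhds h0U)).continuousAt
    have heq : ∀ᶠ w in 𝓝[≠] (0:ℂ), deriv q w = h w := by
      filter_upwards [self_mem_nhdsWithin,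
        mem_nhdsWithin_of_mem_nhds (hUopen.mem_nhds h0U)] with w hw hwU
      exact (hqderiv w hwU hw).deriv
    have t1 : Filter.Tendsto (deriv q) (𝓝[≠] (0:ℂ)) (𝓝 (deriv q 0)) :=
      (hcont1.continuousWithinAt).tendsto
    have t2 : Filter.Tendsto (deriv q) (𝓝[≠] (0:ℂ)) (𝓝 (h 0)) :=
      (hcont2.continuousWithinAt.tendsto).congr' (by filter_upwards [heq] with w hw using hw.symm)
    have hd0 : deriv q 0 = h 0 := tendsto_nhds_unique t1 t2
    exact hd0 ▸ (hqdiff.differentiableAt (hUopen.mem_nhds h0U)).hasDerivAt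
  -- mean value inequality
  have hmvt : ‖q z - q 0‖ ≤ 1 / 2 * ‖z - 0‖ := by
    apply Convex.norm_image_sub_le_of_norm_hasDerivWithin_le
      (f' := h) ?_ hhbound (convex_ball 0 1) h0U hzU
    intro x hxU
    rcases eq_or_ne x 0 with rfl | hx
    · exact hqd0.hasDerivWithinAt
    · exact (hqderiv x hxU hx).hasDerivWithinAt
  rw [hq0, sub_zero] at hmvt
  -- lower bound on ‖f z‖
  have hfzq : f z = z * q z := by
    rw [hqval z hzne]
    field_simp
  have hfz_sub : ‖f z - z‖ ≤ ‖z‖ ^ 2 / 2 := by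
    calc ‖f z - z‖ = ‖z * (q z - 1)‖ := by rw [hfzq]; ring_nf
      _ = ‖z‖ * ‖q z - 1‖ := norm_mul _ _
      _ ≤ ‖z‖ * (1 / 2 * ‖z‖) := by gcongr
      _ = ‖z‖ ^ 2 / 2 := by ring
  have hfz_lb : ‖z‖ - ‖z‖ ^ 2 / 2 ≤ ‖f z‖ := by
    have := norm_sub_norm_le z (f z)
    have h2 : ‖z - f z‖ = ‖f z - z‖ := norm_sub_rev z (f z)
    linarith [hfz_sub, this, h2]
  have hfz_pos : 0 < ‖f z‖ := by nlinarith [hz0, hr1]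
  have hfzne : f z ≠ 0 := norm_pos_iff.mp hfz_pos
  refine ⟨hfzne, ?_⟩
  -- bound on g z
  have hgz : ‖g z‖ ≤ ‖z‖ ^ 2 / 2 := by
    have := hhbound z hzU
    rw [hhval z hzne, norm_div, norm_pow] at this
    rw [div_le_iff₀ (by positivity)] at this
    linarith [this]
  -- w₀
  set w₀ : ℂ := g z / f z with hw₀
  have hquot : z * deriv f z / f z = 1 + w₀ := by
    rw [hw₀, hg]
    field_simp
    ring
  have hw₀norm : ‖w₀‖ < 1 - α := by
    have h1 : ‖w₀‖ = ‖g z‖ / ‖f z‖ := by rw [hw₀, norm_div]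
    have h2 : ‖g z‖ / ‖f z‖ ≤ (‖z‖ ^ 2 / 2) / (‖z‖ - ‖z‖ ^ 2 / 2) := by
      apply div_le_div₀ (by positivity) hgz (by nlinarith [hz0, hr1]) hfz_lb
    have h3 : (‖z‖ ^ 2 / 2) / (‖z‖ - ‖z‖ ^ 2 / 2) < 1 - α := by
      rw [div_lt_iff₀ (by nlinarith [hz0, hr1])]
      nlinarith [mul_pos hz0 (show (0:ℝ) < 2 - 2*α - ‖z‖*(2-α) by linarith)]
    rw [h1]
    linarith [h2, h3]
  rw [hquot]
  have hre : (1 + w₀).re = 1 + w₀.re := by simp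
  rw [hre]
  have : |w₀.re| ≤ ‖w₀‖ := by
    exact Complex.abs_re_le_norm w₀
  have := abs_le.mp this
  linarith [this.1, hw₀norm]
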